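/- Let a ∈ ℝ, V : [a,∞) → ℝ continuous, E ∈ ℝ, and δ > 0. Let ψ : [a,∞) → ℝ be twice continuously differentiable with ψ > 0, ψ''(x) ≥ (V(x)−E)ψ(x) for all x ≥ a, and ψ square-integrable on [a,∞). Let F : [a,∞) → ℝ be continuously differentiable with F > 0 and V(x) − E − (F'(x)/F(x))² ≥ δ for all x ≥ a. Then for every b > a, the functions F·ψ and (F·ψ)' are square-integrable on [b,∞), i.e. ∫_b^∞ ( ((Fψ)'(x))² + (F(x)ψ(x))² ) dx < ∞. -/

import Mathlib

open MeasureTheory Set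

/-- Half-line case of the key Sobolev estimate (Proposition 1.1): for a positive
square-integrable subsolution `ψ` of `−ψ'' + Vψ = Eψ` on `[a,∞)` and an Agmon
multiplier `F > 0` with `V − E − (F'/F)² ≥ δ > 0`, the product `Fψ` has finite `H¹`
norm on `[b,∞)` for every `b > a`. -/
theorem agmon_sobolev_halfline (a : ℝ) (V : ℝ → ℝ) (hV : ContinuousOn V (Set.Ici a))
    (E δ : ℝ) (hδ : 0 < δ) (ψ F : ℝ → ℝ)
    (hψC2 : ContDiffOn ℝ 2 ψ (Set.Ici a)) (hψpos : ∀ x ≥ a, 0 < ψ x)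
    (hsub : ∀ x ≥ a, (V x - E) * ψ x ≤ deriv (deriv ψ) x)
    (hψL2 : IntegrableOn (fun x => (ψ x) ^ 2) (Set.Ici a))
    (hFC1 : ContDiffOn ℝ 1 F (Set.Ici a)) (hFpos : ∀ x ≥ a, 0 < F x)
    (hconstraint : ∀ x ≥ a, δ ≤ V x - E - (deriv F x / F x) ^ 2) :
    ∀ b > a,
      IntegrableOn
        (fun x => (deriv (fun y => F y * ψ y) x) ^ 2 + (F x * ψ x) ^ 2)
        (Set.Ici b) := by
  intro b hb
  have hso : IsOpen (Set.Ioi a) := isOpen_Ioi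
  have hψs : ContDiffOn ℝ 2 ψ (Set.Ioi a) := hψC2.mono Ioi_subset_Ici_self
  have hFs : ContDiffOn ℝ 1 F (Set.Ioi a) := hFC1.mono Ioi_subset_Ici_self
  have hψ1 : ContDiffOn ℝ 1 (deriv ψ) (Set.Ioi a) := hψs.deriv_of_isOpen hso (by norm_num)
  -- differentiability facts
  have hψd : ∀ x ∈ Set.Ioi a, HasDerivAt ψ (deriv ψ x) x := fun x hx =>
    ((hψs.differentiableOn (by norm_num)).differentiableAt (hso.mem_nhds hx)).hasDerivAt
  have hψ'd : ∀ x ∈ Set.Ioi a, HasDerivAt (deriv ψ) (deriv (deriv ψ) x) x := fun x hx =>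
    ((hψ1.differentiableOn (by norm_num)).differentiableAt (hso.mem_nhds hx)).hasDerivAt
  have hFd : ∀ x ∈ Set.Ioi a, HasDerivAt F (deriv F x) x := fun x hx =>
    ((hFs.differentiableOn (by norm_num)).differentiableAt (hso.mem_nhds hx)).hasDerivAt
  -- continuity facts
  have hψc : ContinuousOn ψ (Set.Ioi a) := hψs.continuousOn
  have hψ'c : ContinuousOn (deriv ψ) (Set.Ioi a) := hψ1.continuousOn
  have hψ''c : ContinuousOn (deriv (deriv ψ)) (Set.Ioi a) :=
    (hψ1.deriv_of_isOpen (m := 0) hso (by norm_num)).continuousOn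
  have hFc : ContinuousOn F (Set.Ioi a) := hFs.continuousOn
  have hF'c : ContinuousOn (deriv F) (Set.Ioi a) :=
    (hFs.deriv_of_isOpen (m := 0) hso (by norm_num)).continuousOn
  -- second derivative positivity
  have hψ''pos : ∀ x ∈ Set.Ioi a, 0 < deriv (deriv ψ) x := by
    intro x hx
    have hxa : a ≤ x := le_of_lt hx
    have h1 := hconstraint x hxa
    have h2 := hsub x hxa
    have h3 := hψpos x hxa
    nlinarith [sq_nonneg (deriv F x / F x)]
  -- deriv ψ ≤ 0 on Ioi a
  have hψ'nonpos : ∀ x ∈ Set.Ioi a, deriv ψ x ≤ 0 := by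
    intro x0 hx0
    by_contra hpos
    push_neg at hpos
    -- deriv ψ is strictly monotone on Ici x0
    have hsub1 : Set.Ici x0 ⊆ Set.Ioi a := fun y hy => show a < y from lt_of_lt_of_le (show a < x0 from hx0) hy
    have hmono' : StrictMonoOn (deriv ψ) (Set.Ici x0) := by
      apply StrictMonoOn.mono ?_ (le_refl (Set.Ici x0))
      exact strictMonoOn_of_deriv_pos (convex_Ici x0) (hψ'c.mono hsub1)
        (by
          intro y hy
          rw [interior_Ici] at hy
          exact hψ''pos y (hsub1 (mem_Ici.mpr (le_of_lt (mem_Ioi.mp hy)))))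
    have hψ'pos : ∀ y ∈ Set.Ioi x0, 0 < deriv ψ y := by
      intro y hy
      have := hmono' (le_refl x0 : x0 ∈ Set.Ici x0) (mem_Ici.mpr (le_of_lt (mem_Ioi.mp hy)) : y ∈ Set.Ici x0) hy
      linarith
    have hmonoψ : StrictMonoOn ψ (Set.Ici x0) :=
      strictMonoOn_of_deriv_pos (convex_Ici x0) (hψc.mono hsub1)
        (by
          intro y hy
          rw [interior_Ici] at hy
          exact hψ'pos y hy)
    -- ψ y ≥ ψ x0 > 0 for y ≥ x0, so ψ² ≥ const > 0 on Ici x0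
    have hψx0 : 0 < ψ x0 := hψpos x0 (le_of_lt hx0)
    have hconst : IntegrableOn (fun _ : ℝ => (ψ x0) ^ 2) (Set.Ici x0) := by
      apply Integrable.mono' (hψL2.mono_set (Set.Ici_subset_Ici.mpr (le_of_lt hx0)))
        aestronglyMeasurable_const
      filter_upwards [ae_restrict_mem measurableSet_Ici] with y hy
      have h1 : ψ x0 ≤ ψ y := (hmonoψ.monotoneOn) (self_mem_Ici) hy hy
      rw [Real.norm_eq_abs, abs_of_nonneg (by positivity)]
      nlinarith
    rw [integrableOn_const_iff] at hconst
    rcases hconst with h | h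
    · simp at h; nlinarith
    · simp [Real.volume_Ici] at h
  -- pointwise key inequality and FTC setup
  set G : ℝ → ℝ := fun x => F x ^ 2 * (ψ x * deriv ψ x) with hG
  set G' : ℝ → ℝ := fun x =>
    2 * F x * deriv F x * (ψ x * deriv ψ x) +
      F x ^ 2 * (deriv ψ x * deriv ψ x + ψ x * deriv (deriv ψ) x) with hG'
  have hGd : ∀ x ∈ Set.Ioi a, HasDerivAt G (G' x) x := by
    intro x hx
    have h1 : HasDerivAt (fun y => F y ^ 2) (2 * F x * deriv F x) x := by
      have := (hFd x hx).fun_pow 2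
      simpa [mul_comm, mul_assoc, mul_left_comm] using this
    have h2 : HasDerivAt (fun y => ψ y * deriv ψ y)
        (deriv ψ x * deriv ψ x + ψ x * deriv (deriv ψ) x) x :=
      (hψd x hx).mul (hψ'd x hx)
    exact h1.mul h2
  have hderivFψ : ∀ x ∈ Set.Ioi a,
      deriv (fun y => F y * ψ y) x = deriv F x * ψ x + F x * deriv ψ x := by
    intro x hx
    exact ((hFd x hx).mul (hψd x hx)).deriv
  set g : ℝ → ℝ := fun x =>
    (deriv (fun y => F y * ψ y) x) ^ 2 + δ * (F x * ψ x) ^ 2 with hg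
  have hkey : ∀ x ∈ Set.Ioi a, g x ≤ G' x := by
    intro x hx
    have hxa : a ≤ x := le_of_lt hx
    have hc := hconstraint x hxa
    have hs := hsub x hxa
    have hp := hψpos x hxa
    have hf := hFpos x hxa
    have hfne : F x ≠ 0 := ne_of_gt hf
    have hc2 : δ * F x ^ 2 + deriv F x ^ 2 ≤ (V x - E) * F x ^ 2 := by
      have := mul_le_mul_of_nonneg_right hc (le_of_lt (pow_pos hf 2))
      have hdiv : (deriv F x / F x) ^ 2 * F x ^ 2 = deriv F x ^ 2 := by
        field_simp
      nlinarith
    -- (V-E) F² ψ² ≤ F² ψ ψ''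
    have hs2 : (V x - E) * F x ^ 2 * ψ x ^ 2 ≤ F x ^ 2 * (ψ x * deriv (deriv ψ) x) := by
      have := mul_le_mul_of_nonneg_left hs (le_of_lt (mul_pos (pow_pos hf 2) hp))
      nlinarith
    simp only [hg, hG']
    rw [hderivFψ x hx]
    nlinarith [sq_nonneg (ψ x), mul_le_mul_of_nonneg_right hc2 (sq_nonneg (ψ x))]
  have hIcib : Set.Ici b ⊆ Set.Ioi a := fun y hy => lt_of_lt_of_le hb hy
  -- continuity of g on Ioi a
  have hgc : ContinuousOn g (Set.Ioi a) := by
    have h1 : ContinuousOn (fun x => deriv (fun y => F y * ψ y) x) (Set.Ioi a) := by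
      apply ContinuousOn.congr (f := fun x => deriv F x * ψ x + F x * deriv ψ x)
      · exact (hF'c.mul hψc).add (hFc.mul hψ'c)
      · intro x hx; exact hderivFψ x hx
    exact (h1.pow 2).add (continuousOn_const.mul ((hFc.mul hψc).pow 2))
  have hG'c : ContinuousOn G' (Set.Ioi a) := by
    apply ContinuousOn.add
    · exact ((continuousOn_const.mul hFc).mul hF'c).mul (hψc.mul hψ'c)
    · exact (hFc.pow 2).mul ((hψ'c.mul hψ'c).add (hψc.mul hψ''c))
  -- uniform bound on interval integrals of g
  set C : ℝ := -G b with hC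
  have hbound : ∀ R : ℝ, b ≤ R → (∫ x in b..R, g x) ≤ C := by
    intro R hR
    have hsubI : Set.uIcc b R ⊆ Set.Ioi a := by
      rw [Set.uIcc_of_le hR]
      exact fun y hy => lt_of_lt_of_le hb hy.1
    have hint : IntervalIntegrable G' volume b R :=
      (hG'c.mono hsubI).intervalIntegrable
    have hintg : IntervalIntegrable g volume b R :=
      (hgc.mono hsubI).intervalIntegrable
    have hftc : (∫ x in b..R, G' x) = G R - G b :=
      intervalIntegral.integral_eq_sub_of_hasDerivAt
        (fun x hx => hGd x (hsubI hx)) hint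
    have hGR : G R ≤ 0 := by
      have hRa : R ∈ Set.Ioi a := lt_of_lt_of_le hb hR
      have h1 := hψ'nonpos R hRa
      have h2 := hψpos R (le_of_lt hRa)
      have h3 := sq_nonneg (F R)
      have h4 : ψ R * deriv ψ R ≤ 0 := mul_nonpos_of_nonneg_of_nonpos h2.le h1
      simpa only [hG] using mul_nonpos_of_nonneg_of_nonpos h3 h4
    have hle : (∫ x in b..R, g x) ≤ ∫ x in b..R, G' x := by
      apply intervalIntegral.integral_mono_on hR hintg hint
      intro x hx
      exact hkey x (lt_of_lt_of_le hb hx.1)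
    rw [hftc] at hle
    simp only [hC]
    linarith
  -- integrability of g on Ioi b
  have hgnonneg : ∀ x, 0 ≤ g x := by
    intro x
    have := sq_nonneg (deriv (fun y => F y * ψ y) x)
    have := sq_nonneg (F x * ψ x)
    simp only [hg]
    nlinarith
  have hgint : IntegrableOn g (Set.Ioi b) := by
    apply integrableOn_Ioi_of_intervalIntegral_norm_bounded C b
      (b := fun R : ℝ => R) (l := Filter.atTop)
    · intro R
      rcases le_or_gt b R with h | h
      · have hsubI : Set.uIcc b R ⊆ Set.Ioi a := by
          rw [Set.uIcc_of_le h]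
          exact fun y hy => lt_of_lt_of_le hb hy.1
        exact ((hgc.mono hsubI).intervalIntegrable).1
      · simp [Set.Ioc_eq_empty (not_lt.mpr (le_of_lt h))]
    · exact Filter.tendsto_id
    · filter_upwards [Filter.eventually_ge_atTop b] with R hR
      have : (∫ x in b..R, ‖g x‖) = ∫ x in b..R, g x := by
        apply intervalIntegral.integral_congr
        intro x hx
        exact Real.norm_of_nonneg (hgnonneg x)
      rw [this]
      exact hbound R hR
  have hgint' : IntegrableOn g (Set.Ici b) := by
    rwa [integrableOn_Ici_iff_integrableOn_Ioi]
  -- conclude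
  have htargetc : ContinuousOn
      (fun x => (deriv (fun y => F y * ψ y) x) ^ 2 + (F x * ψ x) ^ 2) (Set.Ici b) := by
    have h1 : ContinuousOn (fun x => deriv (fun y => F y * ψ y) x) (Set.Ici b) := by
      apply ContinuousOn.congr (f := fun x => deriv F x * ψ x + F x * deriv ψ x)
      · exact (((hF'c.mul hψc).add (hFc.mul hψ'c))).mono hIcib
      · intro x hx; exact hderivFψ x (hIcib hx)
    exact (h1.pow 2).add (((hFc.mul hψc).pow 2).mono hIcib)
  apply Integrable.mono' (hgint'.const_mul (1 + 1/δ))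
    (htargetc.aestronglyMeasurable measurableSet_Ici)
  filter_upwards with x
  rw [Real.norm_of_nonneg (by positivity)]
  simp only [hg]
  have h1 := sq_nonneg (deriv (fun y => F y * ψ y) x)
  have h2 := sq_nonneg (F x * ψ x)
  have h3 : 0 < 1/δ := by positivity
  have : (1 + 1/δ) * ((deriv (fun y => F y * ψ y) x) ^ 2 + δ * (F x * ψ x) ^ 2)
      = (deriv (fun y => F y * ψ y) x) ^ 2 + (F x * ψ x) ^ 2
        + (1/δ) * (deriv (fun y => F y * ψ y) x) ^ 2 + δ * (F x * ψ x) ^ 2 := by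
    field_simp
    ring
  nlinarith
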